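/- The quantum capacity of the memory channel correlated by the parametrized AKLT state is Q = log₂ 3 − h₂(θ), where h₂(θ) = −sin²(θ)log₂(sin²θ) − cos²(θ)log₂(cos²θ); equivalently, with λ_p = sin^{2p}(θ)cos^{2(n-p)}(θ)/2 for 0 ≤ p ≤ n-1 (multiplicity 2·C(n,p)) and λ_n = sin^{2n}(θ) (multiplicity 1), one has lim_{n→∞} (1/n)·(−Σ λ log₂ λ over this multiset) = h₂(θ), assuming sin²θ ∈ (0,1). -/

import Mathlib

open Real Filter Finset

lemma aux_total (x y : ℝ) (hxy : x + y = 1) (n : ℕ) :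
    ∑ p ∈ Finset.range (n+1), (n.choose p : ℝ) * (x^p * y^(n-p)) = 1 := by
  rw [show (1:ℝ) = (x+y)^n by rw [hxy, one_pow], add_pow]
  exact Finset.sum_congr rfl (fun p _ => by ring)

lemma aux_mean (x y : ℝ) (hxy : x + y = 1) (n : ℕ) :
    ∑ p ∈ Finset.range (n+1), (p:ℝ) * (n.choose p) * (x^p * y^(n-p)) = n * x := by
  cases n with
  | zero => simp
  | succ m =>
    rw [Finset.sum_range_succ']
    have key : ∀ q ∈ Finset.range (m+1),
        ((q+1:ℕ):ℝ) * ((m+1).choose (q+1)) * (x^(q+1) * y^(m+1-(q+1))) =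
        ((m+1):ℝ) * x * ((m.choose q : ℝ) * (x^q * y^(m-q))) := by
      intro q _
      have h1 : (m+1 : ℝ) * (m.choose q) = ((m+1).choose (q+1) : ℝ) * (q+1) := by
        exact_mod_cast congrArg (Nat.cast : ℕ → ℝ) (Nat.add_one_mul_choose_eq m q)
      rw [Nat.succ_sub_succ, pow_succ]
      push_cast
      linear_combination -(x^q * y^(m-q) * x) * h1
    rw [Finset.sum_congr rfl key, ← Finset.mul_sum, aux_total x y hxy m]
    push_cast
    ring

lemma aux_sum (x y L M : ℝ) (hxy : x + y = 1) (n : ℕ) :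
    ∑ p ∈ Finset.range (n+1), (n.choose p : ℝ) * (x^p * y^(n-p)) *
      ((p:ℝ)*L + ((n-p:ℕ):ℝ)*M - 1) = n*x*L + n*y*M - 1 := by
  have h1 := aux_total x y hxy n
  have h2 := aux_mean x y hxy n
  have h3 : ∑ p ∈ Finset.range (n+1), ((n-p:ℕ):ℝ) * (n.choose p) * (x^p*y^(n-p)) = n*y := by
    have key : ∀ p ∈ Finset.range (n+1), ((n-p:ℕ):ℝ) * (n.choose p) * (x^p*y^(n-p)) =
        (n:ℝ) * ((n.choose p:ℝ)*(x^p*y^(n-p))) - (p:ℝ)*(n.choose p)*(x^p*y^(n-p)) := by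
      intro p hp
      rw [Nat.cast_sub (Nat.le_of_lt_succ (Finset.mem_range.mp hp))]
      ring
    rw [Finset.sum_congr rfl key, Finset.sum_sub_distrib, ← Finset.mul_sum, h1, h2]
    have hy : y = 1 - x := by linarith
    rw [hy]; ring
  have key : ∀ p ∈ Finset.range (n+1),
      (n.choose p : ℝ) * (x^p * y^(n-p)) * ((p:ℝ)*L + ((n-p:ℕ):ℝ)*M - 1) =
      L * ((p:ℝ) * (n.choose p) * (x^p * y^(n-p)))
        + M * (((n-p:ℕ):ℝ) * (n.choose p) * (x^p*y^(n-p)))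
        - (n.choose p : ℝ) * (x^p * y^(n-p)) := by
    intro p _; ring
  rw [Finset.sum_congr rfl key, Finset.sum_sub_distrib, Finset.sum_add_distrib,
    ← Finset.mul_sum, ← Finset.mul_sum, h1, h2, h3]
  ring

/-- Capacity of the channel correlated by the parametrized AKLT state:
`Q = log₂ 3 − h₂(θ)`, where the diagonal entropy rate of the AKLT spectrum
`λ_p = sin^{2p}θ cos^{2(n−p)}θ / 2` (multiplicity `2·C(n,p)`, `0 ≤ p ≤ n−1`) together with
`λ_n = sin^{2n}θ` converges to the binary entropy `h₂(θ)`. -/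
theorem aklt_capacity (θ : ℝ) (h : Real.sin θ ^ 2 ∈ Set.Ioo (0:ℝ) 1) :
    Tendsto (fun n : ℕ =>
      (-(∑ p ∈ Finset.range n,
          2 * (n.choose p : ℝ) * (Real.sin θ ^ (2*p) * Real.cos θ ^ (2*(n-p)) / 2)
            * Real.logb 2 (Real.sin θ ^ (2*p) * Real.cos θ ^ (2*(n-p)) / 2))
        - Real.sin θ ^ (2*n) * Real.logb 2 (Real.sin θ ^ (2*n))) / n)
      atTop
      (nhds (-(Real.sin θ ^ 2 * Real.logb 2 (Real.sin θ ^ 2))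
              - Real.cos θ ^ 2 * Real.logb 2 (Real.cos θ ^ 2))) := by
  obtain ⟨hs0, hs1⟩ := h
  set s : ℝ := Real.sin θ ^ 2 with hs_def
  set c : ℝ := Real.cos θ ^ 2 with hc_def
  have hsc : s + c = 1 := Real.sin_sq_add_cos_sq θ
  have hc0 : 0 < c := by linarith
  set L : ℝ := Real.logb 2 s with hL_def
  set M : ℝ := Real.logb 2 c with hM_def
  -- the target value
  have htarget : (-(s * L) - c * M) = -(s*L + c*M) := by ring
  -- pointwise identity for n ≥ 1
  have hkey : ∀ n : ℕ, 1 ≤ n →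
      (-(∑ p ∈ Finset.range n,
          2 * (n.choose p : ℝ) * (Real.sin θ ^ (2*p) * Real.cos θ ^ (2*(n-p)) / 2)
            * Real.logb 2 (Real.sin θ ^ (2*p) * Real.cos θ ^ (2*(n-p)) / 2))
        - Real.sin θ ^ (2*n) * Real.logb 2 (Real.sin θ ^ (2*n))) / n
      = -(s*L + c*M) + (1 - s^n)/n := by
    intro n hn
    have hn0 : (n:ℝ) ≠ 0 := Nat.cast_ne_zero.mpr (by omega)
    have hterm : ∀ p ∈ Finset.range n,
        2 * (n.choose p : ℝ) * (Real.sin θ ^ (2*p) * Real.cos θ ^ (2*(n-p)) / 2)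
            * Real.logb 2 (Real.sin θ ^ (2*p) * Real.cos θ ^ (2*(n-p)) / 2)
        = (n.choose p : ℝ) * (s^p * c^(n-p)) * ((p:ℝ)*L + ((n-p:ℕ):ℝ)*M - 1) := by
      intro p _
      have e1 : Real.sin θ ^ (2*p) = s^p := by rw [pow_mul]
      have e2 : Real.cos θ ^ (2*(n-p)) = c^(n-p) := by rw [pow_mul]
      have hsp : s^p ≠ 0 := pow_ne_zero _ (ne_of_gt hs0)
      have hcp : c^(n-p) ≠ 0 := pow_ne_zero _ (ne_of_gt hc0)
      have l1 : Real.logb 2 (s^p) = (p:ℝ) * L := Real.logb_pow 2 s p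
      have l2 : Real.logb 2 (c^(n-p)) = ((n-p:ℕ):ℝ) * M := Real.logb_pow 2 c (n-p)
      rw [e1, e2, Real.logb_div (mul_ne_zero hsp hcp) two_ne_zero,
        Real.logb_mul hsp hcp, l1, l2,
        Real.logb_self_eq_one (by norm_num)]
      ring
    rw [Finset.sum_congr rfl hterm]
    have hsum : ∑ p ∈ Finset.range n,
        (n.choose p : ℝ) * (s^p * c^(n-p)) * ((p:ℝ)*L + ((n-p:ℕ):ℝ)*M - 1)
        = (n*s*L + n*c*M - 1) - s^n * ((n:ℝ)*L - 1) := by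
      obtain ⟨m, rfl⟩ : ∃ m, n = m + 1 := ⟨n - 1, by omega⟩
      have := aux_sum s c L M hsc (m+1)
      rw [Finset.sum_range_succ] at this
      have hlast : ((m+1).choose (m+1) : ℝ) * (s^(m+1) * c^((m+1)-(m+1)))
          * (((m+1:ℕ):ℝ)*L + (((m+1)-(m+1):ℕ):ℝ)*M - 1)
          = s^(m+1) * (((m+1:ℕ):ℝ)*L - 1) := by
        simp [Nat.choose_self]
      rw [hlast] at this
      push_cast at this ⊢
      linarith
    rw [hsum]
    have e3 : Real.sin θ ^ (2*n) = s^n := by rw [pow_mul]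
    rw [e3, Real.logb_pow]
    field_simp
    ring
  have hEq : (fun n : ℕ => -(s*L + c*M) + (1 - s^n)/n) =ᶠ[atTop]
      (fun n : ℕ =>
      (-(∑ p ∈ Finset.range n,
          2 * (n.choose p : ℝ) * (Real.sin θ ^ (2*p) * Real.cos θ ^ (2*(n-p)) / 2)
            * Real.logb 2 (Real.sin θ ^ (2*p) * Real.cos θ ^ (2*(n-p)) / 2))
        - Real.sin θ ^ (2*n) * Real.logb 2 (Real.sin θ ^ (2*n))) / n) := by
    filter_upwards [eventually_ge_atTop 1] with n hn
    exact (hkey n hn).symm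
  have hlim : Tendsto (fun n : ℕ => -(s*L + c*M) + (1 - s^n)/n) atTop
      (nhds (-(s * L) - c * M)) := by
    rw [htarget]
    have h1 : Tendsto (fun n : ℕ => (1 - s^n)/n) atTop (nhds 0) := by
      have ha : Tendsto (fun n : ℕ => 1 - s^n) atTop (nhds 1) := by
        have := tendsto_pow_atTop_nhds_zero_of_lt_one (le_of_lt hs0) hs1
        simpa using (tendsto_const_nhds (x := (1:ℝ))).sub this
      have hb : Tendsto (fun n : ℕ => ((n:ℝ))⁻¹) atTop (nhds 0) :=
        tendsto_inv_atTop_nhds_zero_nat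
      have := ha.mul hb
      simpa [div_eq_mul_inv] using this
    have := (tendsto_const_nhds (x := -(s*L + c*M)) (f := atTop (α := ℕ))).add h1
    simpa using this
  exact hlim.congr' hEq
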